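/- Let A be a regularly G-graded algebra with commutation function θ, B any G-graded algebra, and let A ⊗̂ B denote the G-graded algebra with (A ⊗̂ B)_g = A_g ⊗ B_g. For a multilinear G-graded polynomial f = Σ_σ λ_σ x_{g_{σ(1)},σ(1)}⋯x_{g_{σ(n)},σ(n)}, define f^θ = Σ_σ λ_σ θ(ḡ,σ)^{-1} x_{g_{σ(1)},σ(1)}⋯x_{g_{σ(n)},σ(n)}. Then f^θ is a G-graded identity of B if and only if f is a G-graded identity of A ⊗̂ B. -/

import Mathlib

/-- The ordered product of a tuple of elements of a (not necessarily commutative) monoid. -/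
def tupProd {M : Type*} [Monoid M] {n : ℕ} (a : Fin n → M) : M := (List.ofFn a).prod

/-- `σ ∈ Sym(ḡ)`: the permutation `σ` is admissible for the tuple `ḡ`, i.e. the products
`g_1 ⋯ g_n` and `g_{σ(1)} ⋯ g_{σ(n)}` coincide. -/
def Admissible {G : Type*} [Group G] {n : ℕ} (g : Fin n → G) (σ : Equiv.Perm (Fin n)) : Prop :=
  tupProd g = tupProd (g ∘ σ)

/-- `θ` is the commutation function of the regular `G`-grading `Ag` on the `F`-algebra `A`. -/
structure IsRegularGradingWith (F : Type) [Field F] (G : Type) [Group G] [DecidableEq G]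
    (A : Type) [Ring A] [Algebra F A] (Ag : G → Submodule F A)
    (θ : ∀ n : ℕ, (Fin n → G) → Equiv.Perm (Fin n) → Fˣ) : Prop where
  internal : DirectSum.IsInternal Ag
  mul_mem : ∀ g h : G, ∀ a ∈ Ag g, ∀ b ∈ Ag h, a * b ∈ Ag (g * h)
  regular : ∀ (n : ℕ) (g : Fin n → G), ∃ a : Fin n → A,
      (∀ i, a i ∈ Ag (g i)) ∧ tupProd a ≠ 0
  comm : ∀ (n : ℕ) (g : Fin n → G) (σ : Equiv.Perm (Fin n)), Admissible g σ →
      ∀ a : Fin n → A, (∀ i, a i ∈ Ag (g i)) →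
        tupProd a = (θ n g σ : F) • tupProd (a ∘ σ)

/-- `θ` is a `G`-commutation function: it satisfies the cocycle condition
`θ(ḡ,σ)·θ(ḡ^σ,τ) = θ(ḡ,στ)` and (equivalently to the substitution and multiplicativity
conditions of Lemma 2.6 of Aljadeff–David) it is realized as the commutation function of a
regular `G`-grading on some `F`-algebra. -/
def IsGCommFunction (F : Type) [Field F] (G : Type) [Group G] [DecidableEq G]
    (θ : ∀ n : ℕ, (Fin n → G) → Equiv.Perm (Fin n) → Fˣ) : Prop :=
  (∀ (n : ℕ) (g : Fin n → G) (σ τ : Equiv.Perm (Fin n)),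
      Admissible g σ → Admissible (g ∘ σ) τ →
      θ n g σ * θ n (g ∘ σ) τ = θ n g (σ * τ)) ∧
  ∃ (A : Type) (_ : Ring A) (_ : Algebra F A) (Ag : G → Submodule F A),
    IsRegularGradingWith F G A Ag θ

/-- `θ(g,h)` for commuting `g, h`: the value of `θ` on the pair `(g,h)` with the
transposition `(1 2)`. -/
def pairTheta {F : Type} [Field F] {G : Type} [Group G]
    (θ : ∀ n : ℕ, (Fin n → G) → Equiv.Perm (Fin n) → Fˣ) (g h : G) : Fˣ :=
  θ 2 ![g, h] (Equiv.swap 0 1)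

open scoped TensorProduct

/-- `Ag` is a `G`-grading of the algebra `A`. -/
structure IsGrading (F : Type) [Field F] (G : Type) [Group G] [DecidableEq G]
    (A : Type) [Ring A] [Algebra F A] (Ag : G → Submodule F A) : Prop where
  internal : DirectSum.IsInternal Ag
  mul_mem : ∀ g h : G, ∀ a ∈ Ag g, ∀ b ∈ Ag h, a * b ∈ Ag (g * h)

/-- `f` is a `G`-graded identity of the `G`-graded algebra `(A, Ag)`: it vanishes under
every admissible (graded) substitution, where the variable `x_{g,i}` may only be replaced
by elements of `A_g`. -/
def IsGradedIdentity (F : Type) [Field F] (G : Type) [Group G]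
    {A : Type} [Ring A] [Algebra F A] (Ag : G → Submodule F A)
    (f : FreeAlgebra F (G × ℕ)) : Prop :=
  ∀ v : G × ℕ → A, (∀ p, v p ∈ Ag p.1) → FreeAlgebra.lift F v f = 0

/-- The `(g,h)`-component `A_g ⊗ B_h` of `A ⊗ B`; for the envelope we take `g = h`. -/
noncomputable def tensorComponent {F : Type} [Field F] {A B : Type} [Ring A] [Algebra F A]
    [Ring B] [Algebra F B] (p : Submodule F A) (q : Submodule F B) :
    Submodule F (A ⊗[F] B) :=
  LinearMap.range (TensorProduct.map p.subtype q.subtype)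

/-- The multilinear strongly homogeneous polynomial
`f = Σ_{σ ∈ Sym(ḡ)} λ_σ x_{g_{σ(1)},σ(1)} ⋯ x_{g_{σ(n)},σ(n)}` with coefficients `lam`. -/
noncomputable def multilinearPoly (F : Type) [Field F] (G : Type) [Group G] (n : ℕ)
    (g : Fin n → G) (lam : Equiv.Perm (Fin n) → F) : FreeAlgebra F (G × ℕ) :=
  ∑ σ : Equiv.Perm (Fin n), lam σ •
    tupProd (fun i => FreeAlgebra.ι F ((g (σ i), ((σ i : Fin n) : ℕ)) : G × ℕ))

/- ### Auxiliary lemmas -/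

theorem tupProd_map {M N : Type*} [Monoid M] [Monoid N] {FF : Type*} [FunLike FF M N]
    [MonoidHomClass FF M N] (f : FF) {n : ℕ} (a : Fin n → M) :
    f (tupProd a) = tupProd (fun i => f (a i)) := by
  rw [tupProd, tupProd, map_list_prod, List.map_ofFn]
  rfl

theorem tupProd_tmul {F : Type} [Field F] {A B : Type} [Ring A] [Algebra F A] [Ring B]
    [Algebra F B] {n : ℕ} (a : Fin n → A) (b : Fin n → B) :
    tupProd (fun i => a i ⊗ₜ[F] b i) = tupProd a ⊗ₜ[F] tupProd b := by
  induction n with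
  | zero => simp [tupProd, Algebra.TensorProduct.one_def]
  | succ m ih =>
    simp only [tupProd, List.ofFn_succ, List.prod_cons]
    rw [show (List.ofFn fun i : Fin m => a i.succ ⊗ₜ[F] b i.succ).prod
        = tupProd (fun i => a i.succ ⊗ₜ[F] b i.succ) from rfl, ih]
    simp [tupProd, Algebra.TensorProduct.tmul_mul_tmul]

/-- The evaluation of a multilinear graded polynomial as a multilinear map. -/
noncomputable def evalMap (F : Type) [Field F] (R : Type) [Ring R] [Algebra F R]
    (n : ℕ) (lam : Equiv.Perm (Fin n) → F) : MultilinearMap F (fun _ : Fin n => R) R :=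
  ∑ σ : Equiv.Perm (Fin n), lam σ • (MultilinearMap.mkPiAlgebraFin F n R).domDomCongr σ

theorem evalMap_apply (F : Type) [Field F] (R : Type) [Ring R] [Algebra F R]
    (n : ℕ) (lam : Equiv.Perm (Fin n) → F) (u : Fin n → R) :
    evalMap F R n lam u = ∑ σ : Equiv.Perm (Fin n), lam σ • tupProd (fun i => u (σ i)) := by
  simp [evalMap, tupProd, MultilinearMap.domDomCongr_apply]

theorem tmul_right_eq_zero {F : Type} [Field F] {A B : Type} [AddCommGroup A] [Module F A]
    [AddCommGroup B] [Module F B] {x : A} {y : B} (hx : x ≠ 0) (h : x ⊗ₜ[F] y = 0) : y = 0 := by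
  obtain ⟨φ, hφ⟩ : ∃ φ : Module.Dual F A, φ x ≠ 0 := by
    by_contra hc; push_neg at hc
    exact hx ((Module.forall_dual_apply_eq_zero_iff F x).mp hc)
  have h2 : (TensorProduct.lid F B) ((LinearMap.rTensor B φ) (x ⊗ₜ[F] y)) = 0 := by
    rw [h]; simp
  rw [LinearMap.rTensor_tmul, TensorProduct.lid_tmul] at h2
  exact (smul_eq_zero.mp h2).resolve_left hφ

theorem lift_multilinearPoly {F : Type} [Field F] {R : Type} [Ring R] [Algebra F R]
    {G : Type} [Group G] (n : ℕ) (g : Fin n → G) (c : Equiv.Perm (Fin n) → F)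
    (v : G × ℕ → R) :
    FreeAlgebra.lift F v (multilinearPoly F G n g c)
      = ∑ σ : Equiv.Perm (Fin n), c σ • tupProd (fun i => v (g (σ i), (σ i : ℕ))) := by
  rw [multilinearPoly, map_sum]
  refine Finset.sum_congr rfl fun σ _ => ?_
  rw [map_smul]
  congr 1
  rw [tupProd_map]
  simp [FreeAlgebra.lift_ι_apply]

theorem key_sum {F : Type} [Field F] {G : Type} [Group G] [DecidableEq G]
    {A B : Type} [Ring A] [Algebra F A] [Ring B] [Algebra F B]
    {Ag : G → Submodule F A}
    {θ : ∀ n : ℕ, (Fin n → G) → Equiv.Perm (Fin n) → Fˣ}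
    (hA : IsRegularGradingWith F G A Ag θ)
    {n : ℕ} {g : Fin n → G} {lam : Equiv.Perm (Fin n) → F}
    (hsupp : ∀ σ : Equiv.Perm (Fin n), ¬ Admissible g σ → lam σ = 0)
    (a : Fin n → A) (ha : ∀ i, a i ∈ Ag (g i)) (b : Fin n → B) :
    (∑ σ : Equiv.Perm (Fin n),
        lam σ • (tupProd (fun i => a (σ i)) ⊗ₜ[F] tupProd (fun i => b (σ i))))
      = tupProd a ⊗ₜ[F] (∑ σ : Equiv.Perm (Fin n),
          (lam σ * ((θ n g σ)⁻¹ : Fˣ)) • tupProd (fun i => b (σ i))) := by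
  rw [TensorProduct.tmul_sum]
  refine Finset.sum_congr rfl fun σ _ => ?_
  by_cases hσ : Admissible g σ
  · have h := hA.comm n g σ hσ a ha
    have h2 : tupProd (fun i => a (σ i)) = (((θ n g σ)⁻¹ : Fˣ) : F) • tupProd a := by
      rw [h, smul_smul]
      norm_cast
      rw [inv_mul_cancel, Units.val_one, one_smul]
      rfl
    rw [h2, TensorProduct.smul_tmul', TensorProduct.tmul_smul, smul_smul]
    exact (TensorProduct.smul_tmul' _ _ _).symm
  · simp [hsupp σ hσ]

set_option maxHeartbeats 2000000 in
/-- `f^θ ∈ Id_G(B)` if and only if `f ∈ Id_G(A ⊗̂ B)`, where `A ⊗̂ B` is the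
`G`-envelope `(A ⊗̂ B)_g = A_g ⊗ B_g` and `f^θ` is obtained from the multilinear polynomial
`f` by twisting each coefficient `λ_σ` into `λ_σ θ(ḡ,σ)⁻¹`. -/
theorem envelope_identity_iff (F : Type) [Field F] [CharZero F] (G : Type) [Group G]
    [Fintype G] [DecidableEq G]
    (A B : Type) [Ring A] [Algebra F A] [Ring B] [Algebra F B]
    (Ag : G → Submodule F A) (Bg : G → Submodule F B)
    (θ : ∀ n : ℕ, (Fin n → G) → Equiv.Perm (Fin n) → Fˣ)
    (hA : IsRegularGradingWith F G A Ag θ) (hB : IsGrading F G B Bg)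
    (n : ℕ) (g : Fin n → G) (lam : Equiv.Perm (Fin n) → F)
    (hsupp : ∀ σ : Equiv.Perm (Fin n), ¬ Admissible g σ → lam σ = 0) :
    IsGradedIdentity F G Bg
        (multilinearPoly F G n g (fun σ => lam σ * ((θ n g σ)⁻¹ : Fˣ))) ↔
      IsGradedIdentity F G (fun x => tensorComponent (Ag x) (Bg x))
        (multilinearPoly F G n g lam) := by
  constructor
  · -- f^θ identity of B → f identity of A ⊗̂ B
    intro hBid v hv
    rw [lift_multilinearPoly]
    have hE : (∑ σ : Equiv.Perm (Fin n),
        lam σ • tupProd (fun i => v (g (σ i), ((σ i : Fin n) : ℕ))))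
        = evalMap F (A ⊗[F] B) n lam (fun j => v (g j, (j : ℕ))) :=
      (evalMap_apply F (A ⊗[F] B) n lam (fun j => v (g j, (j : ℕ)))).symm
    rw [hE]
    choose t ht using fun j : Fin n => LinearMap.mem_range.mp (hv (g j, (j : ℕ)))
    choose S hS using fun j : Fin n => TensorProduct.exists_finset (t j)
    have hu' : (fun j : Fin n => v (g j, (j : ℕ)))
        = fun j => ∑ p ∈ S j, (((p.1 : ↥(Ag (g j))) : A) ⊗ₜ[F] ((p.2 : ↥(Bg (g j))) : B)) := by
      funext j
      rw [← ht j, hS j, map_sum]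
      simp [TensorProduct.map_tmul]
    rw [hu', MultilinearMap.map_sum_finset]
    refine Finset.sum_eq_zero fun r _ => ?_
    rw [evalMap_apply]
    have hterm : ∀ σ : Equiv.Perm (Fin n),
        tupProd (fun i => (((r (σ i)).1 : ↥(Ag (g (σ i)))) : A)
            ⊗ₜ[F] (((r (σ i)).2 : ↥(Bg (g (σ i)))) : B))
          = tupProd (fun i => (((r (σ i)).1 : ↥(Ag (g (σ i)))) : A))
            ⊗ₜ[F] tupProd (fun i => (((r (σ i)).2 : ↥(Bg (g (σ i)))) : B)) :=
      fun σ => tupProd_tmul _ _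
    calc (∑ σ : Equiv.Perm (Fin n), lam σ •
            tupProd (fun i => (((r (σ i)).1 : ↥(Ag (g (σ i)))) : A)
              ⊗ₜ[F] (((r (σ i)).2 : ↥(Bg (g (σ i)))) : B)))
        = ∑ σ : Equiv.Perm (Fin n), lam σ •
            (tupProd (fun i => (((r (σ i)).1 : ↥(Ag (g (σ i)))) : A))
              ⊗ₜ[F] tupProd (fun i => (((r (σ i)).2 : ↥(Bg (g (σ i)))) : B))) := by
          exact Finset.sum_congr rfl fun σ _ => by rw [hterm σ]
      _ = tupProd (fun j => (((r j).1 : ↥(Ag (g j))) : A)) ⊗ₜ[F]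
            (∑ σ : Equiv.Perm (Fin n), (lam σ * ((θ n g σ)⁻¹ : Fˣ)) •
              tupProd (fun i => (((r (σ i)).2 : ↥(Bg (g (σ i)))) : B))) :=
          key_sum hA hsupp (fun j => (((r j).1 : ↥(Ag (g j))) : A)) (fun j => ((r j).1 : ↥(Ag (g j))).2) (fun j => (((r j).2 : ↥(Bg (g j))) : B))
      _ = 0 := by
          set b : Fin n → B := fun j => (((r j).2 : ↥(Bg (g j))) : B) with hb
          set w : G × ℕ → B := fun p =>
            if h : p.2 < n then (if p.1 = g ⟨p.2, h⟩ then b ⟨p.2, h⟩ else 0) else 0 with hwdef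
          have hw : ∀ p, w p ∈ Bg p.1 := by
            intro p
            rw [hwdef]
            dsimp only
            split_ifs with h1 h2
            · rw [h2]; exact ((r ⟨p.2, h1⟩).2 : ↥(Bg (g ⟨p.2, h1⟩))).2
            · exact zero_mem _
            · exact zero_mem _
          have hwval : ∀ j : Fin n, w (g j, (j : ℕ)) = b j := by
            intro j
            rw [hwdef]
            simp [j.isLt]
          have h0 := hBid w hw
          rw [lift_multilinearPoly] at h0
          simp only [hwval] at h0
          rw [h0, TensorProduct.tmul_zero]
  · -- f identity of A ⊗̂ B → f^θ identity of B
    intro hid w hw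
    obtain ⟨a, ha, hane⟩ := hA.regular n g
    set c : G × ℕ → A := fun p =>
      if h : p.2 < n then (if p.1 = g ⟨p.2, h⟩ then a ⟨p.2, h⟩ else 0) else 0 with hcdef
    have hcmem : ∀ p, c p ∈ Ag p.1 := by
      intro p
      rw [hcdef]
      dsimp only
      split_ifs with h1 h2
      · rw [h2]; exact ha _
      · exact zero_mem _
      · exact zero_mem _
    have hcval : ∀ j : Fin n, c (g j, (j : ℕ)) = a j := by
      intro j
      rw [hcdef]
      simp [j.isLt]
    set v : G × ℕ → A ⊗[F] B := fun p => c p ⊗ₜ[F] w p with hvdef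
    have hvmem : ∀ p : G × ℕ, v p ∈ tensorComponent (Ag p.1) (Bg p.1) := fun p =>
      ⟨(⟨c p, hcmem p⟩ : ↥(Ag p.1)) ⊗ₜ[F] (⟨w p, hw p⟩ : ↥(Bg p.1)), by
        simp [TensorProduct.map_tmul, hvdef]⟩
    have h0 := hid v hvmem
    rw [lift_multilinearPoly] at h0
    have h1 : (∑ σ : Equiv.Perm (Fin n),
        lam σ • tupProd (fun i => v (g (σ i), ((σ i : Fin n) : ℕ))))
        = tupProd a ⊗ₜ[F] (∑ σ : Equiv.Perm (Fin n),
            (lam σ * ((θ n g σ)⁻¹ : Fˣ)) •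
              tupProd (fun i => w (g (σ i), ((σ i : Fin n) : ℕ)))) := by
      rw [← key_sum hA hsupp a ha (fun j => w (g j, (j : ℕ)))]
      refine Finset.sum_congr rfl fun σ _ => ?_
      congr 1
      rw [← tupProd_tmul]
      congr 1
      funext i
      rw [hvdef]
      dsimp only
      rw [hcval]
    rw [h1] at h0
    rw [lift_multilinearPoly]
    exact tmul_right_eq_zero hane h0
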